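/- arXiv:2511.19354 — 2 statements merged into one kernel-verified Lean document; each statement's English description precedes it below -/
import Mathlib

section
/- Fix a ladder system on ω₁. Let u = (u_α)_{α<ω₁} be a sequence of weak P-points in βℕ. Let X, Y ⊆ ω₁, let f^X and f^Y be admissible families for the X-modification u^X and the Y-modification u^Y respectively, and write v_{X,α} := f̃^X_α(u^X_α) and v_{Y,α} := f̃^Y_α(u^Y_α). Then for all α, β < ω₁, if v_{X,α} ≤_C v_{Y,β}, then for each γ ∈ X with γ ≤ α there exists δ ≤ β with δ ∈ Y ∪ Lim(ω₁) such that u_γ ≤_RK u_δ. -/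
/-- The tensor (Fubini) product of ultrafilters: `S ∈ tensor u v` iff
`{x | {y | (x, y) ∈ S} ∈ v} ∈ u`. -/
def tensor {X Y : Type*} (u : Ultrafilter X) (v : Ultrafilter Y) : Ultrafilter (X × Y) :=
  u.bind fun x => v.map fun y => (x, y)

/-- The Rudin–Keisler preorder: `u ≤_RK v` iff `u` is the image of `v` under some map. -/
def RKLE {X Y : Type*} (u : Ultrafilter X) (v : Ultrafilter Y) : Prop :=
  ∃ f : Y → X, Ultrafilter.map f v = u

/-- Isomorphism of ultrafilters: image under a bijection. -/
def UIso {X Y : Type*} (u : Ultrafilter X) (v : Ultrafilter Y) : Prop :=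
  ∃ f : Y → X, Function.Bijective f ∧ Ultrafilter.map f v = u

/-- An ultrafilter is principal iff it is `pure x` for some point `x`. -/
def IsPrincipal {X : Type*} (u : Ultrafilter X) : Prop := ∃ x, u = pure x

/-- A weak P-point: a nonprincipal ultrafilter on `ℕ` not in the closure of any countable
set of ultrafilters avoiding it and all principal ultrafilters. -/
def WeakPPoint (u : Ultrafilter ℕ) : Prop :=
  ¬ IsPrincipal u ∧ ∀ A : Set (Ultrafilter ℕ), A.Countable → u ∉ A →
    (∀ x ∈ A, ¬ IsPrincipal x) → u ∉ closure A

/-- A space `Z` is `u`-compact iff every pushforward of `u` to `Z` converges. -/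
def UCompact {X : Type*} (u : Ultrafilter X) (Z : Type*) [TopologicalSpace Z] : Prop :=
  ∀ f : X → Z, ∃ z : Z, ↑(Ultrafilter.map f u) ≤ nhds z

/-- The Comfort preorder: `u ≤_C v` iff every `v`-compact space is `u`-compact. -/
def ComfortLE {X Y : Type*} (u : Ultrafilter X) (v : Ultrafilter Y) : Prop :=
  ∀ (Z : Type*) [TopologicalSpace Z], UCompact v Z → UCompact u Z

/-- The first uncountable ordinal `ω₁`. -/
noncomputable def omega1 : Ordinal := (Cardinal.aleph 1).ord

/-- A ladder system on `ω₁`: for each nonzero limit `α < ω₁`, a strictly increasing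
`ω`-sequence of ordinals cofinal in `α`. -/
def IsLadderSystem (L : Ordinal → ℕ → Ordinal) : Prop :=
  ∀ α : Ordinal, α < omega1 → Order.IsSuccLimit α →
    StrictMono (L α) ∧ (∀ i : ℕ, L α i < α) ∧ ∀ β < α, ∃ i : ℕ, β ≤ L α i

/-- `vSeq u f α = f̃_α(u_α)`. -/
noncomputable def vSeq (u : Ordinal → Ultrafilter ℕ) (f : Ordinal → ℕ → Ultrafilter ℕ)
    (α : Ordinal) : Ultrafilter ℕ :=
  Ultrafilter.extend (f α) (u α)

/-- `(f_α)_{α<ω₁}` is admissible for `u = (u_α)_{α<ω₁}` (w.r.t. the ladder system `L`):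
writing `v_α := f̃_α(u_α)`, the map `f_0` is injective with principal values; at a successor
`β+1`, `f_{β+1}` is injective with discrete range and all values isomorphic to `v_β`; at a
nonzero limit `α`, `f_α` is injective with discrete range and `f_α(i) ≅ v_{α_i}`. -/
def Admissible (L : Ordinal → ℕ → Ordinal) (u : Ordinal → Ultrafilter ℕ)
    (f : Ordinal → ℕ → Ultrafilter ℕ) : Prop :=
  (Function.Injective (f 0) ∧ ∀ i : ℕ, IsPrincipal (f 0 i)) ∧
  (∀ β : Ordinal, β + 1 < omega1 →
    Function.Injective (f (β + 1)) ∧ DiscreteTopology (Set.range (f (β + 1))) ∧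
    ∀ i : ℕ, UIso (f (β + 1) i) (vSeq u f β)) ∧
  ∀ α : Ordinal, α < omega1 → Order.IsSuccLimit α →
    Function.Injective (f α) ∧ DiscreteTopology (Set.range (f α)) ∧
    ∀ i : ℕ, UIso (f α i) (vSeq u f (L α i))

open Classical in
/-- The `X`-modification of `u`: keep `u_α` for `α ∈ X ∪ Lim(ω₁)` and replace the
remaining values by the principal ultrafilter `pure 0`. -/
noncomputable def modif (u : Ordinal → Ultrafilter ℕ) (X : Set Ordinal)
    (α : Ordinal) : Ultrafilter ℕ :=
  if α ∈ X ∨ (Order.IsSuccLimit α ∧ α < omega1) then u α else pure 0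


section AuxLemmas
open Filter Set Topology

private lemma extend_eq_bind' (f : ℕ → Ultrafilter ℕ) (w : Ultrafilter ℕ) :
    Ultrafilter.extend f w = w.bind f := by
  rw [ultrafilter_extend_eq_iff, ultrafilter_converges_iff]; rfl

private lemma ultra_ext' {u v : Ultrafilter ℕ} (h : ∀ s : Set ℕ, s ∈ u ↔ s ∈ v) : u = v :=
  Ultrafilter.coe_injective (Filter.ext h)

private lemma mem_bind'' {w : Ultrafilter ℕ} {f : ℕ → Ultrafilter ℕ} {s : Set ℕ} :
    s ∈ w.bind f ↔ {j | s ∈ f j} ∈ w := Iff.rfl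

private lemma mem_iff_inter' {f : Ultrafilter ℕ} {B s : Set ℕ} (hB : B ∈ f) :
    s ∈ f ↔ s ∩ B ∈ f :=
  ⟨fun hs => Filter.inter_mem hs hB, fun h => Filter.mem_of_superset h Set.inter_subset_left⟩

private lemma congr_mem' {v : Ultrafilter ℕ} {s t J : Set ℕ} (hJ : J ∈ v)
    (h : ∀ j ∈ J, j ∈ s ↔ j ∈ t) : s ∈ v ↔ t ∈ v := by
  rw [mem_iff_inter' hJ, mem_iff_inter' (s := t) hJ]
  have : s ∩ J = t ∩ J := by
    ext j; exact ⟨fun hj => ⟨(h j hj.2).mp hj.1, hj.2⟩, fun hj => ⟨(h j hj.2).mpr hj.1, hj.2⟩⟩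
  rw [this]

private lemma rkle_refl' (p : Ultrafilter ℕ) : RKLE p p := ⟨id, Ultrafilter.map_id p⟩

private lemma rkle_pure' {p : Ultrafilter ℕ} {x : ℕ} (h : RKLE p (pure x)) : IsPrincipal p := by
  obtain ⟨m, hm⟩ := h
  exact ⟨m x, by rw [← hm, Ultrafilter.map_pure]⟩

private lemma map_bind' (m : ℕ → ℕ) (w : Ultrafilter ℕ) (f : ℕ → Ultrafilter ℕ) :
    Ultrafilter.map m (w.bind f) = w.bind (fun j => Ultrafilter.map m (f j)) :=
  ultra_ext' fun _ => Iff.rfl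

private lemma extend_mem_closure' (g : ℕ → Ultrafilter ℕ) (v : Ultrafilter ℕ) :
    Ultrafilter.extend g v ∈ closure (Set.range g) :=
  mem_closure_iff_ultrafilter.mpr ⟨v.map g,
    by rw [Ultrafilter.mem_map, Set.preimage_range]; exact Filter.univ_mem,
    ultrafilter_extend_eq_iff.mp rfl⟩

private lemma lemA' {p v : Ultrafilter ℕ} {f : ℕ → Ultrafilter ℕ} (hp : WeakPPoint p)
    (h : RKLE p (Ultrafilter.extend f v)) : RKLE p v ∨ ∃ j, RKLE p (f j) := by
  classical
  obtain ⟨m, hm⟩ := h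
  rw [extend_eq_bind', map_bind'] at hm
  set g : ℕ → Ultrafilter ℕ := fun j => Ultrafilter.map m (f j) with hg
  by_cases hJ : {j | IsPrincipal (g j)} ∈ v
  · left
    set k : ℕ → ℕ := fun j => if h : IsPrincipal (g j) then h.choose else 0 with hk
    refine ⟨k, ?_⟩
    rw [← hm]
    apply ultra_ext'
    intro S
    rw [Ultrafilter.mem_map, mem_bind'']
    refine (congr_mem' hJ fun j hj => ?_)
    have hjp : IsPrincipal (g j) := hj
    have hkj : g j = pure (k j) := by
      rw [hk]; simp only [dif_pos hjp]; exact hjp.choose_spec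
    rw [Set.mem_preimage, Set.mem_setOf_eq, hkj, Ultrafilter.mem_pure]
  · have hJc : {j | IsPrincipal (g j)}ᶜ ∈ v := Ultrafilter.compl_mem_iff_notMem.mpr hJ
    obtain ⟨j₀, hj₀⟩ := Ultrafilter.nonempty_of_mem hJc
    set g' : ℕ → Ultrafilter ℕ := fun j => if IsPrincipal (g j) then g j₀ else g j with hg'
    have hgg' : v.bind g = v.bind g' := by
      apply ultra_ext'
      intro S
      rw [mem_bind'', mem_bind'']
      refine congr_mem' hJc fun j hj => ?_
      have hj' : ¬ IsPrincipal (g j) := hj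
      have : g' j = g j := by rw [hg']; simp only [if_neg hj']
      rw [Set.mem_setOf_eq, Set.mem_setOf_eq, this]
    have hcl : p ∈ closure (Set.range g') := by
      rw [← hm, hgg', ← extend_eq_bind']
      exact extend_mem_closure' g' v
    by_cases hpA : p ∈ Set.range g'
    · obtain ⟨j, hj⟩ := hpA
      by_cases hjp : IsPrincipal (g j)
      · refine Or.inr ⟨j₀, m, ?_⟩
        rw [← hj, hg']; simp only [if_pos hjp]; rfl
      · refine Or.inr ⟨j, m, ?_⟩
        rw [← hj, hg']; simp only [if_neg hjp]; rfl
    · exfalso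
      refine hp.2 (Set.range g') (Set.countable_range g') hpA ?_ hcl
      rintro x ⟨j, rfl⟩
      by_cases hjp : IsPrincipal (g j)
      · rw [hg']; simp only [if_pos hjp]; exact hj₀
      · rw [hg']; simp only [if_neg hjp]; exact hjp

/-- A family of ultrafilters admitting pairwise disjoint member sets. -/
private def Separated' (f : ℕ → Ultrafilter ℕ) : Prop :=
  ∃ B : ℕ → Set ℕ, (∀ i j, i ≠ j → B i ∩ B j = ∅) ∧ ∀ j, B j ∈ f j

open Classical in
private noncomputable def pick (B : ℕ → Set ℕ) (n : ℕ) : ℕ :=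
  if h : ∃ j, n ∈ B j then h.choose else 0

private lemma pick_eq {B : ℕ → Set ℕ} (hd : ∀ i j, i ≠ j → B i ∩ B j = ∅) {n j : ℕ}
    (hn : n ∈ B j) : pick B n = j := by
  have h : ∃ j, n ∈ B j := ⟨j, hn⟩
  rw [pick]
  rw [dif_pos h]
  by_contra hne
  have := hd _ _ hne
  exact Set.eq_empty_iff_forall_notMem.mp this n ⟨h.choose_spec, hn⟩

private lemma sum_rkle_base {f : ℕ → Ultrafilter ℕ} (hf : Separated' f) (w : Ultrafilter ℕ) :
    RKLE w (Ultrafilter.extend f w) := by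
  obtain ⟨B, hd, hB⟩ := hf
  refine ⟨pick B, ?_⟩
  rw [extend_eq_bind']
  apply ultra_ext'
  intro S
  rw [Ultrafilter.mem_map]
  show {j | pick B ⁻¹' S ∈ f j} ∈ w ↔ S ∈ w
  have : {j | pick B ⁻¹' S ∈ f j} = S := by
    ext j
    simp only [Set.mem_setOf_eq]
    constructor
    · intro hmem
      obtain ⟨n, hn1, hn2⟩ := Ultrafilter.nonempty_of_mem (Filter.inter_mem hmem (hB j))
      rw [Set.mem_preimage, pick_eq hd hn2] at hn1
      exact hn1
    · intro hj
      exact Filter.mem_of_superset (hB j) fun n hn => by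
        rw [Set.mem_preimage, pick_eq hd hn]; exact hj
  rw [this]

private lemma sum_rkle_of_all {f : ℕ → Ultrafilter ℕ} (hf : Separated' f) {w p : Ultrafilter ℕ}
    {A : Set ℕ} (hA : A ∈ w) (h : ∀ j ∈ A, RKLE p (f j)) :
    RKLE p (Ultrafilter.extend f w) := by
  classical
  obtain ⟨B, hd, hB⟩ := hf
  have hch : ∀ j, ∃ mj : ℕ → ℕ, j ∈ A → Ultrafilter.map mj (f j) = p := by
    intro j
    by_cases hj : j ∈ A
    · exact ⟨(h j hj).choose, fun _ => (h j hj).choose_spec⟩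
    · exact ⟨id, fun hjA => absurd hjA hj⟩
  choose m hm using hch
  refine ⟨fun n => m (pick B n) n, ?_⟩
  rw [extend_eq_bind']
  apply ultra_ext'
  intro S
  rw [Ultrafilter.mem_map]
  show {j | (fun n => m (pick B n) n) ⁻¹' S ∈ f j} ∈ w ↔ S ∈ p
  have key : ∀ j ∈ A, ((fun n => m (pick B n) n) ⁻¹' S ∈ f j ↔ S ∈ p) := by
    intro j hj
    rw [mem_iff_inter' (hB j)]
    have heq : (fun n => m (pick B n) n) ⁻¹' S ∩ B j = (m j) ⁻¹' S ∩ B j := by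
      ext n
      constructor
      · rintro ⟨h1, h2⟩
        rw [Set.mem_preimage, pick_eq hd h2] at h1
        exact ⟨h1, h2⟩
      · rintro ⟨h1, h2⟩
        refine ⟨?_, h2⟩
        rw [Set.mem_preimage, pick_eq hd h2]
        exact h1
    rw [heq, ← mem_iff_inter' (hB j), ← Ultrafilter.mem_map, hm j hj]
  constructor
  · intro hmem
    by_contra hS
    obtain ⟨j, hj1, hj2⟩ := Ultrafilter.nonempty_of_mem (Filter.inter_mem hmem hA)
    exact hS ((key j hj2).mp hj1)
  · intro hS
    exact Filter.mem_of_superset hA fun j hj => (key j hj).mpr hS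

private lemma sets_of_discrete {f : ℕ → Ultrafilter ℕ} (hinj : Function.Injective f)
    (hd : DiscreteTopology (Set.range f)) :
    ∃ A : ℕ → Set ℕ, (∀ j, A j ∈ f j) ∧ ∀ i j, A j ∈ f i → i = j := by
  have key : ∀ j : ℕ, ∃ A : Set ℕ, A ∈ f j ∧ ∀ i, A ∈ f i → i = j := by
    intro j
    have hopen : IsOpen {x : Set.range f | x = ⟨f j, Set.mem_range_self j⟩} :=
      isOpen_discrete _
    rw [isOpen_induced_iff] at hopen
    obtain ⟨U, hU, hUeq⟩ := hopen
    have hfj : f j ∈ U := by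
      have : (⟨f j, Set.mem_range_self j⟩ : Set.range f) ∈ Subtype.val ⁻¹' U := by
        rw [hUeq]; rfl
      exact this
    obtain ⟨b, hb, hxb, hbU⟩ := ultrafilterBasis_is_basis.isOpen_iff.mp hU (f j) hfj
    obtain ⟨A, rfl⟩ := hb
    refine ⟨A, hxb, fun i hAi => ?_⟩
    have : f i ∈ U := hbU hAi
    have h2 : (⟨f i, Set.mem_range_self i⟩ : Set.range f) ∈ Subtype.val ⁻¹' U := this
    rw [hUeq] at h2
    have : f i = f j := congrArg Subtype.val h2
    exact hinj this
  choose A hA1 hA2 using key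
  exact ⟨A, hA1, fun i j h => hA2 j i h⟩

private lemma separated_of_sets {f : ℕ → Ultrafilter ℕ} (A : ℕ → Set ℕ)
    (hA1 : ∀ j, A j ∈ f j) (hA2 : ∀ i j, A j ∈ f i → i = j) : Separated' f := by
  refine ⟨fun j => A j ∩ ⋂ i ∈ Finset.range j, (A i)ᶜ, ?_, ?_⟩
  · have key : ∀ i j : ℕ, i < j →
        (A i ∩ ⋂ k ∈ Finset.range i, (A k)ᶜ) ∩ (A j ∩ ⋂ k ∈ Finset.range j, (A k)ᶜ) = ∅ := by
      intro i j hij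
      apply Set.eq_empty_iff_forall_notMem.mpr
      rintro n ⟨⟨hni, -⟩, ⟨-, hnj⟩⟩
      have := Set.mem_iInter₂.mp hnj i (Finset.mem_range.mpr hij)
      exact this hni
    intro i j hij
    rcases lt_or_gt_of_ne hij with h | h
    · exact key i j h
    · rw [Set.inter_comm]; exact key j i h
  · intro j
    refine Filter.inter_mem (hA1 j) ?_
    refine (Filter.biInter_mem (Finset.finite_toSet (Finset.range j))).mpr ?_
    intro i hi
    rw [Ultrafilter.mem_coe, Ultrafilter.compl_mem_iff_notMem]
    intro hAi
    exact (Finset.mem_range.mp hi).ne ((hA2 j i hAi).symm)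

private lemma separated_of_discrete {f : ℕ → Ultrafilter ℕ} (hinj : Function.Injective f)
    (hd : DiscreteTopology (Set.range f)) : Separated' f := by
  obtain ⟨A, hA1, hA2⟩ := sets_of_discrete hinj hd
  exact separated_of_sets A hA1 hA2

private lemma separated_of_principal {f : ℕ → Ultrafilter ℕ} (hinj : Function.Injective f)
    (hprin : ∀ i, IsPrincipal (f i)) : Separated' f := by
  refine separated_of_sets (fun i => {(hprin i).choose}) (fun j => ?_) (fun i j h => ?_)
  · have h0 : {(hprin j).choose} ∈ (pure (hprin j).choose : Ultrafilter ℕ) :=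
      Ultrafilter.mem_pure.mpr rfl
    rwa [← (hprin j).choose_spec] at h0
  · rw [(hprin i).choose_spec, Ultrafilter.mem_pure, Set.mem_singleton_iff] at h
    apply hinj
    rw [(hprin i).choose_spec, (hprin j).choose_spec, h]

private lemma rkle_trans' {p q r : Ultrafilter ℕ} (h1 : RKLE p q) (h2 : RKLE q r) : RKLE p r := by
  obtain ⟨a, ha⟩ := h1; obtain ⟨b, hb⟩ := h2
  exact ⟨a ∘ b, by rw [← Ultrafilter.map_map, hb, ha]⟩

private lemma uiso_rkle' {a b : Ultrafilter ℕ} (h : UIso a b) : RKLE a b :=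
  ⟨h.choose, h.choose_spec.2⟩

private lemma uiso_rkle_rev' {a b : Ultrafilter ℕ} (h : UIso a b) : RKLE b a := by
  obtain ⟨g, hg, hmap⟩ := h
  let e := Equiv.ofBijective g hg
  refine ⟨e.symm, ?_⟩
  rw [← hmap, Ultrafilter.map_map]
  have : (e.symm : ℕ → ℕ) ∘ g = id := by
    funext x
    exact e.symm_apply_apply x
  rw [this, Ultrafilter.map_id]

private lemma rkle_of_rkle_uiso {p a b : Ultrafilter ℕ} (h1 : RKLE p b) (h2 : UIso a b) :
    RKLE p a :=
  rkle_trans' h1 (uiso_rkle_rev' h2)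

private lemma rkle_ucompact {p q : Ultrafilter ℕ} (h : RKLE p q) {Z : Type*}
    [TopologicalSpace Z] (hq : UCompact q Z) : UCompact p Z := by
  obtain ⟨m, hm⟩ := h
  intro f
  obtain ⟨z, hz⟩ := hq (f ∘ m)
  exact ⟨z, by rw [← hm, Ultrafilter.map_map]; exact hz⟩

private lemma ucomp_transfer {X Z W : Type*} [TopologicalSpace Z] [TopologicalSpace W]
    (u : Ultrafilter X) (e : Z ≃ₜ W) (h : UCompact u Z) : UCompact u W := by
  intro f
  obtain ⟨z, hz⟩ := h (e.symm ∘ f)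
  refine ⟨e z, ?_⟩
  have h1 : (f : X → W) = e ∘ (e.symm ∘ f) := by
    funext n; simp
  rw [h1, ← Ultrafilter.map_map, Ultrafilter.coe_map]
  calc Filter.map e ↑(Ultrafilter.map (⇑e.symm ∘ f) u)
      ≤ Filter.map e (nhds z) := Filter.map_mono hz
    _ ≤ nhds (e z) := (e.continuous.tendsto z)

private lemma lemB' {p q : Ultrafilter ℕ} (hp : WeakPPoint p)
    (hC : UCompact q {r : Ultrafilter ℕ // ¬ RKLE p r} →
      UCompact p {r : Ultrafilter ℕ // ¬ RKLE p r}) :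
    RKLE p q := by
  by_contra hnot
  have hqc : UCompact q {r : Ultrafilter ℕ // ¬ RKLE p r} := by
    intro f
    have hz : ¬ RKLE p (Ultrafilter.extend (fun n => (f n).1) q) := by
      intro hr
      rcases lemA' hp hr with h | ⟨j, hj⟩
      exacts [hnot h, (f j).2 hj]
    refine ⟨⟨_, hz⟩, ?_⟩
    rw [nhds_subtype_eq_comap, ← Filter.map_le_iff_le_comap]
    have : Filter.map Subtype.val (Ultrafilter.map f q : Filter {r : Ultrafilter ℕ // ¬ RKLE p r})
        = (Ultrafilter.map (fun n => (f n).1) q : Filter (Ultrafilter ℕ)) := by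
      rw [Ultrafilter.coe_map, Ultrafilter.coe_map, Filter.map_map]
      rfl
    rw [this]
    exact ultrafilter_extend_eq_iff.mp rfl
  obtain ⟨z₀, hz₀⟩ := hC hqc (fun n => ⟨pure n, fun hr => hp.1 (rkle_pure' hr)⟩)
  have hle : (Ultrafilter.map (pure : ℕ → Ultrafilter ℕ) p : Filter (Ultrafilter ℕ))
      ≤ nhds (z₀ : Ultrafilter ℕ) := by
    have h1 : Filter.map Subtype.val
        (Ultrafilter.map (fun n => (⟨pure n, fun hr => hp.1 (rkle_pure' hr)⟩ :
          {r : Ultrafilter ℕ // ¬ RKLE p r})) p : Filter {r : Ultrafilter ℕ // ¬ RKLE p r})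
          = (Ultrafilter.map (pure : ℕ → Ultrafilter ℕ) p : Filter (Ultrafilter ℕ)) := by
      rw [Ultrafilter.coe_map, Ultrafilter.coe_map, Filter.map_map]
      rfl
    rw [← h1]
    refine le_trans (Filter.map_mono hz₀) ?_
    exact continuous_subtype_val.tendsto z₀
  have hz₀p : (z₀ : Ultrafilter ℕ) = p := by
    rw [ultrafilter_converges_iff] at hle
    rw [hle]
    exact bind_pure p
  exact z₀.2 (by rw [hz₀p]; exact rkle_refl' p)

private lemma cofinal_mem {w : Ultrafilter ℕ} (h : ¬ IsPrincipal w) (i : ℕ) :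
    {j | i ≤ j} ∈ w := by
  rcases Ultrafilter.le_cofinite_or_eq_pure w with h1 | h2
  · apply h1
    have : {j : ℕ | i ≤ j} = {j | j < i}ᶜ := by ext j; simp [not_lt]
    rw [this]
    exact Set.Finite.compl_mem_cofinite (Set.finite_lt_nat i)
  · exact absurd h2 h

private lemma separated_admissible (L : Ordinal → ℕ → Ordinal) (u' : Ordinal → Ultrafilter ℕ)
    (f : Ordinal → ℕ → Ultrafilter ℕ) (hf : Admissible L u' f) (α : Ordinal)
    (hα : α < omega1) : Separated' (f α) := by
  rcases Ordinal.zero_or_succ_or_isSuccLimit α with rfl | ⟨β, rfl⟩ | hlim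
  · exact separated_of_principal hf.1.1 hf.1.2
  · have hβ1 : β + 1 < omega1 := by rwa [Ordinal.add_one_eq_succ]
    obtain ⟨hinj, hdisc, -⟩ := hf.2.1 β hβ1
    rw [← Ordinal.add_one_eq_succ]
    exact separated_of_discrete hinj hdisc
  · obtain ⟨hinj, hdisc, -⟩ := hf.2.2 α hα hlim
    exact separated_of_discrete hinj hdisc

private lemma forward_rkle (L : Ordinal → ℕ → Ordinal) (hL : IsLadderSystem L)
    (u : Ordinal → Ultrafilter ℕ) (hu : ∀ α : Ordinal, α < omega1 → WeakPPoint (u α))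
    (X : Set Ordinal) (fX : Ordinal → ℕ → Ultrafilter ℕ)
    (hfX : Admissible L (modif u X) fX) :
    ∀ α : Ordinal, α < omega1 → ∀ γ ∈ X, γ ≤ α → RKLE (u γ) (vSeq (modif u X) fX α) := by
  intro α
  induction α using Ordinal.induction with
  | _ α IH =>
  intro hα γ hγX hγα
  have hsep : Separated' (fX α) := separated_admissible L (modif u X) fX hfX α hα
  rcases eq_or_lt_of_le hγα with rfl | hlt
  · have hmod : modif u X γ = u γ := if_pos (Or.inl hγX)
    show RKLE (u γ) (Ultrafilter.extend (fX γ) (modif u X γ))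
    rw [hmod]
    have := sum_rkle_base hsep (u γ)
    rwa [← hmod, hmod] at this
  · rcases Ordinal.zero_or_succ_or_isSuccLimit α with rfl | ⟨β, rfl⟩ | hlim
    · exact absurd hlt (not_lt_zero (a := γ))
    · have hβ1 : β + 1 < omega1 := by rwa [Ordinal.add_one_eq_succ]
      obtain ⟨-, -, hiso⟩ := hfX.2.1 β hβ1
      have hβω : β < omega1 := lt_trans (Order.lt_succ β) hα
      have hIH : RKLE (u γ) (vSeq (modif u X) fX β) :=
        IH β (Order.lt_succ β) hβω γ hγX (Order.lt_succ_iff.mp hlt)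
      refine sum_rkle_of_all hsep Filter.univ_mem (fun j _ => ?_)
      have hj := hiso j
      rw [Ordinal.add_one_eq_succ] at hj
      exact rkle_of_rkle_uiso hIH hj
    · obtain ⟨hmono, hlt', hcof⟩ := hL α hα hlim
      obtain ⟨-, -, hiso⟩ := hfX.2.2 α hα hlim
      obtain ⟨i₀, hi₀⟩ := hcof γ hlt
      have humod : modif u X α = u α := if_pos (Or.inr ⟨hlim, hα⟩)
      have hA : {j | i₀ ≤ j} ∈ modif u X α := by
        rw [humod]
        exact cofinal_mem (hu α hα).1 i₀
      refine sum_rkle_of_all hsep hA (fun j hj => ?_)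
      have h1 : γ ≤ L α j := le_trans hi₀ (hmono.monotone hj)
      have h2 : L α j < α := hlt' j
      exact rkle_of_rkle_uiso (IH (L α j) h2 (lt_trans h2 hα) γ hγX h1) (hiso j)

private lemma backward_rkle (L : Ordinal → ℕ → Ordinal) (hL : IsLadderSystem L)
    (u : Ordinal → Ultrafilter ℕ) (Y : Set Ordinal) (fY : Ordinal → ℕ → Ultrafilter ℕ)
    (hfY : Admissible L (modif u Y) fY) :
    ∀ β : Ordinal, β < omega1 → ∀ p : Ultrafilter ℕ, WeakPPoint p →
      RKLE p (vSeq (modif u Y) fY β) →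
      ∃ δ ≤ β, (δ ∈ Y ∨ (Order.IsSuccLimit δ ∧ δ < omega1)) ∧ RKLE p (u δ) := by
  intro β
  induction β using Ordinal.induction with
  | _ β IH =>
  intro hβ p hp hps
  have hps' : RKLE p (Ultrafilter.extend (fY β) (modif u Y β)) := hps
  rcases lemA' hp hps' with h | ⟨j, hj⟩
  · by_cases hmem : β ∈ Y ∨ (Order.IsSuccLimit β ∧ β < omega1)
    · refine ⟨β, le_refl β, hmem, ?_⟩
      have : modif u Y β = u β := if_pos hmem
      rwa [this] at h
    · have : modif u Y β = pure 0 := if_neg hmem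
      rw [this] at h
      exact absurd (rkle_pure' h) hp.1
  · rcases Ordinal.zero_or_succ_or_isSuccLimit β with rfl | ⟨σ, rfl⟩ | hlim
    · obtain ⟨x, hx⟩ := hfY.1.2 j
      rw [hx] at hj
      exact absurd (rkle_pure' hj) hp.1
    · have hσ1 : σ + 1 < omega1 := by rwa [Ordinal.add_one_eq_succ]
      obtain ⟨-, -, hiso⟩ := hfY.2.1 σ hσ1
      have hjσ := hiso j
      rw [Ordinal.add_one_eq_succ] at hjσ
      have hps2 : RKLE p (vSeq (modif u Y) fY σ) := rkle_trans' hj (uiso_rkle' hjσ)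
      obtain ⟨δ, hδ, hmem, hrk⟩ :=
        IH σ (Order.lt_succ σ) (lt_trans (Order.lt_succ σ) hβ) p hp hps2
      exact ⟨δ, le_trans hδ (le_of_lt (Order.lt_succ σ)), hmem, hrk⟩
    · obtain ⟨-, hlt', -⟩ := hL β hβ hlim
      obtain ⟨-, -, hiso⟩ := hfY.2.2 β hβ hlim
      have hps2 : RKLE p (vSeq (modif u Y) fY (L β j)) :=
        rkle_trans' hj (uiso_rkle' (hiso j))
      obtain ⟨δ, hδ, hmem, hrk⟩ := IH (L β j) (hlt' j) (lt_trans (hlt' j) hβ) p hp hps2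
      exact ⟨δ, le_trans hδ (le_of_lt (hlt' j)), hmem, hrk⟩

end AuxLemmas

theorem stmt14 (L : Ordinal → ℕ → Ordinal) (hL : IsLadderSystem L)
    (u : Ordinal → Ultrafilter ℕ)
    (hu : ∀ α : Ordinal, α < omega1 → WeakPPoint (u α))
    (X Y : Set Ordinal) (fX fY : Ordinal → ℕ → Ultrafilter ℕ)
    (hfX : Admissible L (modif u X) fX) (hfY : Admissible L (modif u Y) fY) :
    ∀ α β : Ordinal, α < omega1 → β < omega1 →
      ComfortLE (vSeq (modif u X) fX α) (vSeq (modif u Y) fY β) →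
      ∀ γ ∈ X, γ ≤ α →
        ∃ δ ≤ β, (δ ∈ Y ∨ (Order.IsSuccLimit δ ∧ δ < omega1)) ∧ RKLE (u γ) (u δ) := by
  intro α β hα hβ hC γ hγX hγα
  have hγω : γ < omega1 := lt_of_le_of_lt hγα hα
  have hwp : WeakPPoint (u γ) := hu γ hγω
  have h1 : RKLE (u γ) (vSeq (modif u X) fX α) :=
    forward_rkle L hL u hu X fX hfX α hα γ hγX hγα
  have hchain : UCompact (vSeq (modif u Y) fY β) {r : Ultrafilter ℕ // ¬ RKLE (u γ) r} →
      UCompact (u γ) {r : Ultrafilter ℕ // ¬ RKLE (u γ) r} := by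
    intro h
    have h2 := ucomp_transfer (vSeq (modif u Y) fY β)
      (Homeomorph.ulift (X := {r : Ultrafilter ℕ // ¬ RKLE (u γ) r})).symm h
    have h3 := hC _ h2
    have h4 := rkle_ucompact h1 h3
    exact ucomp_transfer (u γ) Homeomorph.ulift h4
  have hRK : RKLE (u γ) (vSeq (modif u Y) fY β) := lemB' hwp hchain
  exact backward_rkle L hL u Y fY hfY β hβ (u γ) hwp hRK
end

section
/- Let κ be a cardinal with κ < 2^ℵ₀ and let K be a type of cardinality κ. For every nonprincipal u ∈ βℕ the following are equivalent: (i) u is a weak P_{κ⁺}-point; (ii) for all f : K → βℕ and v ∈ Ultrafilter K with f̃(v) = u there exists α ∈ K with f(α) = u or f(α) principal; (iii) for all f : K → βℕ and v ∈ Ultrafilter K with f̃(v) = u, either {α : f(α) = u} ∈ v or {α : f(α) is principal} ∈ v; (iv) for all g : K × ℕ → ℕ, v ∈ Ultrafilter K and w ∈ βℕ with u = Ultrafilter.map g (v ⊗ w), there exists α ∈ K such that Ultrafilter.map (fun j => g (α, j)) w equals u or is principal; (v) for all g : K × ℕ → ℕ, v ∈ Ultrafilter K and w ∈ βℕ with u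 = Ultrafilter.map g (v ⊗ w), either {α : Ultrafilter.map (fun j => g (α, j)) w = u} ∈ v or {α : Ultrafilter.map (fun j => g (α, j)) w is principal} ∈ v. -/
/-- A weak `P_{κ⁺}`-point: a nonprincipal ultrafilter on `ℕ` not in the closure of any
set of ultrafilters of cardinality at most `κ` avoiding it and all principal ultrafilters. -/
def WeakPSuccPoint (κ : Cardinal) (u : Ultrafilter ℕ) : Prop :=
  ¬ IsPrincipal u ∧ ∀ A : Set (Ultrafilter ℕ), Cardinal.mk ↥A ≤ κ → u ∉ A →
    (∀ x ∈ A, ¬ IsPrincipal x) → u ∉ closure A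

section auxlemmasStmt19
open Filter Set

lemma exists_dense_seq (K : Type) (hle : Cardinal.mk K ≤ 2 ^ Cardinal.aleph0) :
    ∃ F : ℕ → K → ℕ, ∀ (t : Finset K) (ψ : K → ℕ), ∃ m, ∀ α ∈ t, F m α = ψ α := by
  have hcard : Cardinal.mk K ≤ Cardinal.mk (ℕ → Bool) := by
    rw [Cardinal.mk_arrow]
    simpa using hle
  obtain ⟨x⟩ := (Cardinal.le_def _ _).mp hcard
  classical
  -- countable domain
  let D := Σ n : ℕ, ((Fin n → Bool) → ℕ)
  haveI : Nonempty D := ⟨⟨0, fun _ => 0⟩⟩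
  obtain ⟨e, he⟩ := exists_surjective_nat D
  refine ⟨fun m α => (e m).2 (fun i => x α i), fun t ψ => ?_⟩
  -- choose a separating length
  let sep : K → K → ℕ := fun α β =>
    if h : x α = x β then 0 else Nat.find (Function.ne_iff.mp h) + 1
  let n : ℕ := t.sup fun α => t.sup fun β => sep α β
  have hsep : ∀ α ∈ t, ∀ β ∈ t, (fun i : Fin n => x α i) = (fun i : Fin n => x β i) → α = β := by
    intro α hα β hβ hr
    by_contra hne
    have hxne : x α ≠ x β := fun h => hne (x.injective h)
    have hfind := Nat.find_spec (Function.ne_iff.mp hxne)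
    have hlt : Nat.find (Function.ne_iff.mp hxne) < n := by
      have h1 : sep α β ≤ n :=
        le_trans (Finset.le_sup (f := fun β => sep α β) hβ)
          (Finset.le_sup (f := fun α => t.sup fun β => sep α β) hα)
      have : sep α β = Nat.find (Function.ne_iff.mp hxne) + 1 := by simp only [sep, dif_neg hxne]
      omega
    exact hfind (congrFun hr ⟨_, hlt⟩)
  let φ : (Fin n → Bool) → ℕ := fun ρ =>
    if h : ∃ α, α ∈ t ∧ (fun i : Fin n => x α i.val) = ρ then ψ h.choose else 0
  obtain ⟨m, hm⟩ := he ⟨n, φ⟩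
  refine ⟨m, fun α hα => ?_⟩
  have hex : ∃ β, β ∈ t ∧ (fun i : Fin n => x β i.val) = (fun i : Fin n => x α i.val) :=
    ⟨α, hα, rfl⟩
  show (e m).2 (fun i => x α i) = ψ α
  rw [hm]
  show φ (fun i : Fin n => x α i.val) = ψ α
  simp only [φ, dif_pos hex]
  have h1 := hex.choose_spec
  rw [hsep _ h1.1 _ hα h1.2]

lemma exists_common_bound (K : Type) (hle : Cardinal.mk K ≤ 2 ^ Cardinal.aleph0)
    (f : K → Ultrafilter ℕ) :
    ∃ (w : Ultrafilter ℕ) (g : K × ℕ → ℕ),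
      ∀ α, Ultrafilter.map (fun j => g (α, j)) w = f α := by
  obtain ⟨F, hF⟩ := exists_dense_seq K hle
  classical
  set l : Filter ℕ := ⨅ α, Filter.comap (fun m => F m α) ↑(f α) with hl
  have hne : l.NeBot := by
    constructor
    intro hbot
    have hmem : (∅ : Set ℕ) ∈ l := by rw [hbot]; exact mem_bot
    rw [hl, Filter.mem_iInf] at hmem
    obtain ⟨I, hIfin, V, hV, hU⟩ := hmem
    choose T hT1 hT2 using fun i : I => Filter.mem_comap.mp (hV i)
    choose y hy using fun i : I => Ultrafilter.nonempty_of_mem (hT1 i)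
    haveI := hIfin.fintype
    obtain ⟨m, hm⟩ := hF hIfin.toFinset (fun α => if h : α ∈ I then y ⟨α, h⟩ else 0)
    have : m ∈ (∅ : Set ℕ) := by
      rw [hU, Set.mem_iInter]
      intro i
      apply hT2 i
      have : F m i.val = y i := by
        rw [hm i.val (hIfin.mem_toFinset.mpr i.2)]
        simp [i.2]
      simpa [Set.mem_preimage, this] using hy i
    exact this
  refine ⟨Ultrafilter.of l, fun p => F p.2 p.1, fun α => ?_⟩
  apply Ultrafilter.coe_le_coe.mp
  calc (Ultrafilter.map (fun j => F j α) (Ultrafilter.of l) : Filter ℕ)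
      = Filter.map (fun j => F j α) ↑(Ultrafilter.of l) := Ultrafilter.coe_map _ _
    _ ≤ Filter.map (fun j => F j α) (Filter.comap (fun m => F m α) ↑(f α)) :=
        Filter.map_mono ((Ultrafilter.of_le l).trans (iInf_le _ α))
    _ ≤ ↑(f α) := Filter.map_comap_le


lemma aux_joinM {K : Type} (v : Ultrafilter K) (f : K → Ultrafilter ℕ) :
    joinM (Ultrafilter.map f v) = v.bind f := by
  ext s
  change {x : Ultrafilter ℕ | s ∈ x} ∈ Ultrafilter.map f v ↔ _
  rw [Ultrafilter.mem_map]
  rfl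

lemma map_tensor_eq {K : Type} (g : K × ℕ → ℕ) (v : Ultrafilter K) (w : Ultrafilter ℕ) :
    Ultrafilter.map g (tensor v w) = v.bind (fun α => Ultrafilter.map (fun j => g (α, j)) w) := by
  ext s
  change g ⁻¹' s ∈ tensor v w ↔ _
  change {α | g ⁻¹' s ∈ Ultrafilter.map _ w} ∈ v ↔ _
  rfl

lemma extend_eq_bind {K : Type} (f : K → Ultrafilter ℕ) (v : Ultrafilter K) :
    Ultrafilter.extend f v = v.bind f := by
  rw [ultrafilter_extend_eq_iff, ultrafilter_converges_iff, aux_joinM]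

-- P1 → P2
lemma p1_to_p2 {κ : Cardinal} {K : Type} (hK : Cardinal.mk K = κ) {u : Ultrafilter ℕ}
    (h : WeakPSuccPoint κ u) :
    ∀ (f : K → Ultrafilter ℕ) (v : Ultrafilter K),
        Ultrafilter.extend f v = u → ∃ α : K, f α = u ∨ IsPrincipal (f α) := by
  intro f v hfv
  by_contra hc
  push_neg at hc
  have h1 : u ∉ Set.range f := by
    rintro ⟨α, hα⟩
    exact (hc α).1 hα
  have hcl : u ∈ closure (Set.range f) :=
    mem_closure_iff_ultrafilter.mpr ⟨v.map f, range_mem_map, ultrafilter_extend_eq_iff.mp hfv⟩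
  refine h.2 (Set.range f) ?_ h1 ?_ hcl
  · rw [← hK]; exact Cardinal.mk_range_le
  · rintro _ ⟨α, rfl⟩
    exact (hc α).2

-- P2 → P3
lemma p2_to_p3 {K : Type} {u : Ultrafilter ℕ}
    (h : ∀ (f : K → Ultrafilter ℕ) (v : Ultrafilter K),
        Ultrafilter.extend f v = u → ∃ α : K, f α = u ∨ IsPrincipal (f α)) :
    ∀ (f : K → Ultrafilter ℕ) (v : Ultrafilter K),
        Ultrafilter.extend f v = u →
        {α : K | f α = u} ∈ v ∨ {α : K | IsPrincipal (f α)} ∈ v := by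
  classical
  intro f v hfv
  by_contra hc
  push_neg at hc
  obtain ⟨h1, h2⟩ := hc
  have hB : {α : K | f α ≠ u ∧ ¬ IsPrincipal (f α)} ∈ v := by
    have c1 := Ultrafilter.compl_mem_iff_notMem.mpr h1
    have c2 := Ultrafilter.compl_mem_iff_notMem.mpr h2
    have := inter_mem c1 c2
    refine mem_of_superset this ?_
    intro α hα
    exact ⟨hα.1, hα.2⟩
  obtain ⟨α₀, hα₀⟩ := Ultrafilter.nonempty_of_mem hB
  set f' : K → Ultrafilter ℕ :=
    fun α => if f α ≠ u ∧ ¬ IsPrincipal (f α) then f α else f α₀ with hf'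
  have hgood : ∀ α, f' α ≠ u ∧ ¬ IsPrincipal (f' α) := by
    intro α
    by_cases hb : f α ≠ u ∧ ¬ IsPrincipal (f α)
    · simp only [hf', if_pos hb]; exact hb
    · simpa [hf', hb] using hα₀
  have hmapeq : Ultrafilter.map f' v = Ultrafilter.map f v := by
    apply Ultrafilter.coe_injective
    rw [Ultrafilter.coe_map, Ultrafilter.coe_map]
    apply Filter.map_congr
    filter_upwards [hB] with α hα
    simp [hf', hα]
  have hext : Ultrafilter.extend f' v = u := by
    rw [ultrafilter_extend_eq_iff, hmapeq]
    exact ultrafilter_extend_eq_iff.mp hfv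
  obtain ⟨α, hα⟩ := h f' v hext
  rcases hα with hα | hα
  · exact (hgood α).1 hα
  · exact (hgood α).2 hα

-- P3 → P5
lemma p3_to_p5 {K : Type} {u : Ultrafilter ℕ}
    (h : ∀ (f : K → Ultrafilter ℕ) (v : Ultrafilter K),
        Ultrafilter.extend f v = u →
        {α : K | f α = u} ∈ v ∨ {α : K | IsPrincipal (f α)} ∈ v) :
    ∀ (g : K × ℕ → ℕ) (v : Ultrafilter K) (w : Ultrafilter ℕ),
        u = Ultrafilter.map g (tensor v w) →
        {α : K | Ultrafilter.map (fun j => g (α, j)) w = u} ∈ v ∨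
        {α : K | IsPrincipal (Ultrafilter.map (fun j => g (α, j)) w)} ∈ v := by
  intro g v w hgu
  have hext : Ultrafilter.extend (fun α => Ultrafilter.map (fun j => g (α, j)) w) v = u := by
    rw [extend_eq_bind, ← map_tensor_eq, ← hgu]
  exact h _ v hext

-- P5 → P4
lemma p5_to_p4 {K : Type} {u : Ultrafilter ℕ}
    (h : ∀ (g : K × ℕ → ℕ) (v : Ultrafilter K) (w : Ultrafilter ℕ),
        u = Ultrafilter.map g (tensor v w) →
        {α : K | Ultrafilter.map (fun j => g (α, j)) w = u} ∈ v ∨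
        {α : K | IsPrincipal (Ultrafilter.map (fun j => g (α, j)) w)} ∈ v) :
    ∀ (g : K × ℕ → ℕ) (v : Ultrafilter K) (w : Ultrafilter ℕ),
        u = Ultrafilter.map g (tensor v w) →
        ∃ α : K, Ultrafilter.map (fun j => g (α, j)) w = u ∨
          IsPrincipal (Ultrafilter.map (fun j => g (α, j)) w) := by
  intro g v w hgu
  rcases h g v w hgu with hh | hh
  · obtain ⟨α, hα⟩ := Ultrafilter.nonempty_of_mem hh
    exact ⟨α, Or.inl hα⟩
  · obtain ⟨α, hα⟩ := Ultrafilter.nonempty_of_mem hh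
    exact ⟨α, Or.inr hα⟩

-- P4 → P1
lemma p4_to_p1 {κ : Cardinal} (hκ : κ < (2 : Cardinal) ^ Cardinal.aleph0)
    {K : Type} (hK : Cardinal.mk K = κ) {u : Ultrafilter ℕ} (hu : ¬ IsPrincipal u)
    (h : ∀ (g : K × ℕ → ℕ) (v : Ultrafilter K) (w : Ultrafilter ℕ),
        u = Ultrafilter.map g (tensor v w) →
        ∃ α : K, Ultrafilter.map (fun j => g (α, j)) w = u ∨
          IsPrincipal (Ultrafilter.map (fun j => g (α, j)) w)) :
    WeakPSuccPoint κ u := by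
  classical
  refine ⟨hu, fun A hA hA1 hA2 hcl => ?_⟩
  obtain ⟨W, hAW, hW⟩ := mem_closure_iff_ultrafilter.mp hcl
  have hAne : A.Nonempty := Ultrafilter.nonempty_of_mem hAW
  haveI : Nonempty A := hAne.to_subtype
  obtain ⟨e⟩ : Nonempty (A ↪ K) := by
    rw [← Cardinal.le_def]
    rw [hK]; exact hA
  let s : K → A := Function.invFun e
  have hs : ∀ a : A, s (e a) = a := Function.leftInverse_invFun e.injective
  let f : K → Ultrafilter ℕ := fun α => (s α : Ultrafilter ℕ)
  haveI hcom : (Filter.comap f ↑W).NeBot := by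
    rw [Filter.comap_neBot_iff]
    intro t ht
    obtain ⟨z, hzt, hzA⟩ := Ultrafilter.nonempty_of_mem (inter_mem ht hAW)
    refine ⟨e ⟨z, hzA⟩, ?_⟩
    show f (e ⟨z, hzA⟩) ∈ t
    simp only [f, hs ⟨z, hzA⟩]
    exact hzt
  set v := Ultrafilter.of (Filter.comap f ↑W) with hv
  have hmap : ↑(Ultrafilter.map f v) ≤ nhds u := by
    calc (Ultrafilter.map f v : Filter (Ultrafilter ℕ)) = Filter.map f ↑v :=
          Ultrafilter.coe_map _ _
      _ ≤ Filter.map f (Filter.comap f ↑W) := Filter.map_mono (Ultrafilter.of_le _)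
      _ ≤ ↑W := Filter.map_comap_le
      _ ≤ nhds u := hW
  have hbind : v.bind f = u := by
    have := ultrafilter_converges_iff.mp hmap
    rw [aux_joinM] at this
    exact this.symm
  obtain ⟨w, g, hg⟩ := exists_common_bound K (by rw [hK]; exact hκ.le) f
  have hgu : u = Ultrafilter.map g (tensor v w) := by
    rw [map_tensor_eq]
    have : (fun α => Ultrafilter.map (fun j => g (α, j)) w) = f := funext hg
    rw [this, hbind]
  obtain ⟨α, hα⟩ := h g v w hgu
  rw [hg α] at hα
  have hfα : f α ∈ A := (s α).2
  rcases hα with h' | h'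
  · rw [h'] at hfα; exact hA1 hfα
  · exact hA2 _ hfα h'


end auxlemmasStmt19

theorem stmt19 (κ : Cardinal) (hκ : κ < (2 : Cardinal) ^ Cardinal.aleph0)
    (K : Type) (hK : Cardinal.mk K = κ)
    (u : Ultrafilter ℕ) (hu : ¬ IsPrincipal u) :
    (WeakPSuccPoint κ u ↔ ∀ (f : K → Ultrafilter ℕ) (v : Ultrafilter K),
        Ultrafilter.extend f v = u → ∃ α : K, f α = u ∨ IsPrincipal (f α)) ∧
    (WeakPSuccPoint κ u ↔ ∀ (f : K → Ultrafilter ℕ) (v : Ultrafilter K),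
        Ultrafilter.extend f v = u →
        {α : K | f α = u} ∈ v ∨ {α : K | IsPrincipal (f α)} ∈ v) ∧
    (WeakPSuccPoint κ u ↔ ∀ (g : K × ℕ → ℕ) (v : Ultrafilter K) (w : Ultrafilter ℕ),
        u = Ultrafilter.map g (tensor v w) →
        ∃ α : K, Ultrafilter.map (fun j => g (α, j)) w = u ∨
          IsPrincipal (Ultrafilter.map (fun j => g (α, j)) w)) ∧
    (WeakPSuccPoint κ u ↔ ∀ (g : K × ℕ → ℕ) (v : Ultrafilter K) (w : Ultrafilter ℕ),
        u = Ultrafilter.map g (tensor v w) →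
        {α : K | Ultrafilter.map (fun j => g (α, j)) w = u} ∈ v ∨
        {α : K | IsPrincipal (Ultrafilter.map (fun j => g (α, j)) w)} ∈ v) := by
  have h2 := @p1_to_p2 κ K hK u
  have h3 := @p2_to_p3 K u
  have h5 := @p3_to_p5 K u
  have h4 := @p5_to_p4 K u
  have h1 := @p4_to_p1 κ hκ K hK u hu
  exact ⟨⟨fun h => h2 h, fun h => h1 (h4 (h5 (h3 h)))⟩,
         ⟨fun h => h3 (h2 h), fun h => h1 (h4 (h5 h))⟩,
         ⟨fun h => h4 (h5 (h3 (h2 h))), fun h => h1 h⟩,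
         ⟨fun h => h5 (h3 (h2 h)), fun h => h1 (h4 h)⟩⟩
end
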